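/- Theorem 1 (50% infinite-bias threshold from subexponential growth of pure-Z logicals), asymptotic form: let K > 0 and α > 0 be real constants and p ∈ [0, 1/2). For each n, let 𝓛ₙ be a finite family of finite subsets of Fin n, each of cardinality at least K·n^α, and suppose (log |𝓛ₙ|)/n^α → 0 as n → ∞. Then there exists c > 0 such that for all sufficiently large n, the probability (under the random subset E of Fin n in which each element is included independently with probability p) of the event { ∃ L ∈ 𝓛ₙ with 2·|E ∩ L| ≥ |L| } is at most exp(−c·n^α); in particular this probability tends to 0. -/

import Mathlib

open MeasureTheory

/-- The product over `Fin n` of the Bernoulli measure on `Bool` assigning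
probability `p` to `true` (for `0 ≤ p ≤ 1`, where the clamping by `1` is inert). -/
noncomputable def productBernoulli (n : ℕ) (p : ℝ) : Measure (Fin n → Bool) :=
  Measure.pi fun _ =>
    (PMF.bernoulli (min (Real.toNNReal p) 1) (min_le_right _ _)).toMeasure

/-- The random error subset of `Fin n` determined by a sample `ω : Fin n → Bool`. -/
def errSet {n : ℕ} (ω : Fin n → Bool) : Finset (Fin n) :=
  Finset.univ.filter fun i => ω i = true

-- real term bound
lemma term_bound {p : ℝ} (hp0 : 0 ≤ p) (hp : p ≤ 1/2) {m k : ℕ} (hkm : k ≤ m)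
    (hmk : m ≤ 2 * k) :
    p ^ k * (1 - p) ^ (m - k) ≤ Real.sqrt (p * (1 - p)) ^ m := by
  set a := Real.sqrt p with ha
  set b := Real.sqrt (1 - p) with hb
  have hp1 : 0 ≤ 1 - p := by linarith
  have ha0 : 0 ≤ a := Real.sqrt_nonneg _
  have hb0 : 0 ≤ b := Real.sqrt_nonneg _
  have hab : a ≤ b := Real.sqrt_le_sqrt (by linarith)
  have h1 : p = a ^ 2 := (Real.sq_sqrt hp0).symm
  have h2 : 1 - p = b ^ 2 := (Real.sq_sqrt hp1).symm
  have h3 : Real.sqrt (p * (1 - p)) = a * b := Real.sqrt_mul hp0 _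
  rw [h3, h2, h1, ← pow_mul, ← pow_mul, mul_pow]
  obtain ⟨d, hd⟩ : ∃ d, 2 * k = m + d := ⟨2 * k - m, by omega⟩
  calc a ^ (2 * k) * b ^ (2 * (m - k))
      = (a ^ m * b ^ (2 * (m - k))) * a ^ d := by
        rw [hd, pow_add]; ring
    _ ≤ (a ^ m * b ^ (2 * (m - k))) * b ^ d :=
        mul_le_mul_of_nonneg_left (pow_le_pow_left₀ ha0 hab d)
          (mul_nonneg (pow_nonneg ha0 _) (pow_nonneg hb0 _))
    _ = a ^ m * b ^ (2 * (m - k) + d) := by rw [pow_add]; ring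
    _ = a ^ m * b ^ m := by rw [show 2 * (m - k) + d = m by omega]

lemma bernoulli_true {p : ℝ} (hp0 : 0 ≤ p) (hp1 : p ≤ 1) :
    (PMF.bernoulli (min (Real.toNNReal p) 1) (min_le_right _ _)).toMeasure {true}
      = ENNReal.ofReal p := by
  rw [PMF.toMeasure_apply_singleton _ _ (measurableSet_singleton _), PMF.bernoulli_apply]
  simp only [cond]
  rw [min_eq_left (Real.toNNReal_le_one.2 hp1)]
  rfl

lemma bernoulli_false {p : ℝ} (hp0 : 0 ≤ p) (hp1 : p ≤ 1) :
    (PMF.bernoulli (min (Real.toNNReal p) 1) (min_le_right _ _)).toMeasure {false}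
      = ENNReal.ofReal (1 - p) := by
  rw [PMF.toMeasure_apply_singleton _ _ (measurableSet_singleton _), PMF.bernoulli_apply]
  simp only [cond]
  rw [min_eq_left (Real.toNNReal_le_one.2 hp1),
    ENNReal.ofReal_sub _ hp0, ENNReal.ofReal_one]
  rfl

lemma key_bound {p : ℝ} (hp0 : 0 ≤ p) (hp : p ≤ 1/2) {n : ℕ} (L : Finset (Fin n)) :
    productBernoulli n p {ω | L.card ≤ 2 * (errSet ω ∩ L).card}
      ≤ ENNReal.ofReal ((2 * Real.sqrt (p * (1 - p))) ^ L.card) := by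
  classical
  have hp1 : p ≤ 1 := by linarith
  set m := L.card with hm
  set P := (L.powerset).filter (fun S => m ≤ 2 * S.card) with hP
  set C : Finset (Fin n) → Set (Fin n → Bool) := fun S =>
    Set.pi Set.univ (fun i => if i ∈ L then {decide (i ∈ S)} else Set.univ) with hC
  -- inclusion
  have hsub : {ω : Fin n → Bool | m ≤ 2 * (errSet ω ∩ L).card} ⊆ ⋃ S ∈ P, C S := by
    intro ω hω
    have h1 : (errSet ω ∩ L) ∈ P := by
      simp only [hP, Finset.mem_filter, Finset.mem_powerset]
      exact ⟨Finset.inter_subset_right, hω⟩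
    refine Set.mem_biUnion h1 ?_
    intro i _
    simp only [hC]
    by_cases hi : i ∈ L
    · simp only [if_pos hi, Set.mem_singleton_iff, errSet, Finset.mem_inter,
        Finset.mem_filter, Finset.mem_univ, true_and]
      by_cases hωi : ω i = true
      · simp [hωi, hi]
      · simp [hωi, hi, Bool.eq_false_iff.2 hωi]
    · simp [if_neg hi]
  -- measure of each cylinder
  have hmeas : ∀ S ∈ P, productBernoulli n p (C S)
      ≤ ENNReal.ofReal (Real.sqrt (p * (1 - p)) ^ m) := by
    intro S hS
    simp only [hP, Finset.mem_filter, Finset.mem_powerset] at hS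
    obtain ⟨hSL, hSc⟩ := hS
    have hcalc : productBernoulli n p (C S)
        = ENNReal.ofReal p ^ S.card * ENNReal.ofReal (1 - p) ^ (m - S.card) := by
      rw [hC, productBernoulli, Measure.pi_pi]
      have : ∀ i : Fin n,
          (PMF.bernoulli (min (Real.toNNReal p) 1) (min_le_right _ _)).toMeasure
            (if i ∈ L then {decide (i ∈ S)} else Set.univ)
          = if i ∈ L then (if i ∈ S then ENNReal.ofReal p else ENNReal.ofReal (1 - p))
            else 1 := by
        intro i
        by_cases hi : i ∈ L
        · simp only [if_pos hi]
          by_cases hiS : i ∈ S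
          · simp [hiS, bernoulli_true hp0 hp1]
          · simp [hiS, bernoulli_false hp0 hp1]
        · rw [if_neg hi, if_neg hi, measure_univ]
      simp only [this]
      rw [Finset.prod_ite_mem Finset.univ L, Finset.univ_inter,
        ← Finset.prod_sdiff hSL]
      rw [Finset.prod_congr rfl (fun i hi => if_neg (Finset.mem_sdiff.1 hi).2),
        Finset.prod_congr rfl (fun i (hi : i ∈ S) => if_pos hi),
        Finset.prod_const, Finset.prod_const, Finset.card_sdiff_of_subset hSL, mul_comm]
    rw [hcalc, ← ENNReal.ofReal_pow hp0, ← ENNReal.ofReal_pow (by linarith),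
      ← ENNReal.ofReal_mul (by positivity)]
    exact ENNReal.ofReal_le_ofReal
      (term_bound hp0 hp (Finset.card_le_card hSL) hSc)
  calc productBernoulli n p {ω | m ≤ 2 * (errSet ω ∩ L).card}
      ≤ productBernoulli n p (⋃ S ∈ P, C S) := measure_mono hsub
    _ ≤ ∑ S ∈ P, productBernoulli n p (C S) := measure_biUnion_finset_le _ _
    _ ≤ ∑ S ∈ P, ENNReal.ofReal (Real.sqrt (p * (1 - p)) ^ m) :=
        Finset.sum_le_sum hmeas
    _ = P.card * ENNReal.ofReal (Real.sqrt (p * (1 - p)) ^ m) := by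
        rw [Finset.sum_const, nsmul_eq_mul]
    _ ≤ (2 ^ m : ℕ) * ENNReal.ofReal (Real.sqrt (p * (1 - p)) ^ m) := by
        refine mul_le_mul_left ?_ _
        have : P.card ≤ 2 ^ m := (Finset.card_filter_le _ _).trans
          (le_of_eq (by rw [Finset.card_powerset]))
        exact_mod_cast Nat.cast_le.2 this
    _ = ENNReal.ofReal ((2 * Real.sqrt (p * (1 - p))) ^ m) := by
        rw [mul_pow, ENNReal.ofReal_mul (by positivity)]
        congr 1
        rw [show ((2:ℝ)^m) = ((2^m : ℕ) : ℝ) by push_cast; ring,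
          ENNReal.ofReal_natCast]

/-- Theorem 1 (50% infinite-bias threshold from subexponential growth of pure-Z
logicals), asymptotic form: if every `L ∈ 𝓛ₙ` has cardinality at least `K·n^α` and
`log |𝓛ₙ| / n^α → 0`, then for some `c > 0` the failure probability is eventually
at most `exp(−c·n^α)`; in particular it tends to `0`. -/
theorem fifty_percent_threshold_subexponential (K α p : ℝ)
    (hK : 0 < K) (hα : 0 < α) (hp0 : 0 ≤ p) (hp : p < 1 / 2)
    (𝓛 : (n : ℕ) → Finset (Finset (Fin n)))
    (hcard : ∀ n : ℕ, ∀ L ∈ 𝓛 n, K * (n : ℝ) ^ α ≤ (L.card : ℝ))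
    (hsubexp : Filter.Tendsto (fun n : ℕ => Real.log ((𝓛 n).card : ℝ) / (n : ℝ) ^ α)
      Filter.atTop (nhds 0)) :
    ∃ c > 0,
      (∀ᶠ n : ℕ in Filter.atTop,
          productBernoulli n p {ω | ∃ L ∈ 𝓛 n, L.card ≤ 2 * (errSet ω ∩ L).card}
            ≤ ENNReal.ofReal (Real.exp (-c * (n : ℝ) ^ α))) ∧
      Filter.Tendsto
        (fun n : ℕ =>
          productBernoulli n p {ω | ∃ L ∈ 𝓛 n, L.card ≤ 2 * (errSet ω ∩ L).card})
        Filter.atTop (nhds 0) := by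
  classical
  set r : ℝ := 2 * Real.sqrt (p * (1 - p)) with hr
  have hr0 : 0 ≤ r := by positivity
  have hrlt : r < 1 := by
    have hs : Real.sqrt (p * (1 - p)) < 1 / 2 := by
      rw [show (1:ℝ)/2 = Real.sqrt ((1/2)^2) by
        rw [Real.sqrt_sq (by norm_num)]]
      apply Real.sqrt_lt_sqrt (by nlinarith)
      nlinarith [sq_nonneg (1/2 - p)]
    linarith
  set r₀ : ℝ := max r (1/2) with hr₀
  have h0r₀ : 0 < r₀ := lt_of_lt_of_le (by norm_num) (le_max_right _ _)
  have hr₀1 : r₀ < 1 := max_lt hrlt (by norm_num)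
  have hrr₀ : r ≤ r₀ := le_max_left _ _
  set D : ℝ := -Real.log r₀ with hD
  have hD0 : 0 < D := by
    have := Real.log_neg h0r₀ hr₀1
    simp only [hD]; linarith
  refine ⟨D * K / 2, by positivity, ?_⟩
  have hA : ∀ᶠ n : ℕ in Filter.atTop,
      productBernoulli n p {ω | ∃ L ∈ 𝓛 n, L.card ≤ 2 * (errSet ω ∩ L).card}
        ≤ ENNReal.ofReal (Real.exp (-(D * K / 2) * (n : ℝ) ^ α)) := by
    have h2 : ∀ᶠ n : ℕ in Filter.atTop,
        Real.log ((𝓛 n).card : ℝ) / (n : ℝ) ^ α < D * K / 2 :=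
      hsubexp.eventually_lt_const (by positivity)
    filter_upwards [h2, Filter.eventually_ge_atTop 1] with n hn2 hn1
    have hn1' : (1 : ℝ) ≤ (n : ℝ) := by exact_mod_cast hn1
    have hnα : 0 < (n : ℝ) ^ α := Real.rpow_pos_of_pos (by linarith) α
    have hlog : Real.log ((𝓛 n).card : ℝ) < D * K / 2 * (n : ℝ) ^ α :=
      (div_lt_iff₀ hnα).1 hn2
    -- union bound
    have hunion : {ω : Fin n → Bool | ∃ L ∈ 𝓛 n, L.card ≤ 2 * (errSet ω ∩ L).card}
        = ⋃ L ∈ 𝓛 n, {ω | L.card ≤ 2 * (errSet ω ∩ L).card} := by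
      ext ω; simp [Set.mem_iUnion]
    have hperL : ∀ L ∈ 𝓛 n,
        productBernoulli n p {ω | L.card ≤ 2 * (errSet ω ∩ L).card}
          ≤ ENNReal.ofReal (Real.exp (K * (n : ℝ) ^ α * Real.log r₀)) := by
      intro L hL
      refine (key_bound hp0 hp.le L).trans (ENNReal.ofReal_le_ofReal ?_)
      calc r ^ L.card ≤ r₀ ^ L.card := pow_le_pow_left₀ hr0 hrr₀ _
        _ = r₀ ^ ((L.card : ℝ)) := (Real.rpow_natCast r₀ L.card).symm
        _ ≤ r₀ ^ (K * (n : ℝ) ^ α) :=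
            Real.rpow_le_rpow_of_exponent_ge h0r₀ hr₀1.le (hcard n L hL)
        _ = Real.exp (K * (n : ℝ) ^ α * Real.log r₀) := by
            rw [Real.rpow_def_of_pos h0r₀, mul_comm]
    calc productBernoulli n p {ω | ∃ L ∈ 𝓛 n, L.card ≤ 2 * (errSet ω ∩ L).card}
        ≤ ∑ L ∈ 𝓛 n, productBernoulli n p {ω | L.card ≤ 2 * (errSet ω ∩ L).card} := by
          rw [hunion]; exact measure_biUnion_finset_le _ _
      _ ≤ ∑ L ∈ 𝓛 n, ENNReal.ofReal (Real.exp (K * (n : ℝ) ^ α * Real.log r₀)) :=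
          Finset.sum_le_sum hperL
      _ = ENNReal.ofReal (((𝓛 n).card : ℝ) * Real.exp (K * (n : ℝ) ^ α * Real.log r₀)) := by
          rw [Finset.sum_const, nsmul_eq_mul,
            ENNReal.ofReal_mul (by positivity), ENNReal.ofReal_natCast]
      _ ≤ ENNReal.ofReal (Real.exp (-(D * K / 2) * (n : ℝ) ^ α)) := by
          apply ENNReal.ofReal_le_ofReal
          calc ((𝓛 n).card : ℝ) * Real.exp (K * (n : ℝ) ^ α * Real.log r₀)
              ≤ Real.exp (Real.log ((𝓛 n).card : ℝ))
                  * Real.exp (K * (n : ℝ) ^ α * Real.log r₀) := by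
                exact mul_le_mul_of_nonneg_right (Real.le_exp_log _)
                  (Real.exp_nonneg _)
            _ = Real.exp (Real.log ((𝓛 n).card : ℝ) + K * (n : ℝ) ^ α * Real.log r₀) :=
                (Real.exp_add _ _).symm
            _ ≤ Real.exp (-(D * K / 2) * (n : ℝ) ^ α) := by
                apply Real.exp_le_exp.2
                have : Real.log r₀ = -D := by simp [hD]
                rw [this]
                nlinarith [hnα, hlog, hD0, hK]
  refine ⟨hA, ?_⟩
  have hexp : Filter.Tendsto
      (fun n : ℕ => ENNReal.ofReal (Real.exp (-(D * K / 2) * (n : ℝ) ^ α)))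
      Filter.atTop (nhds 0) := by
    have h1 : Filter.Tendsto (fun n : ℕ => (D * K / 2) * (n : ℝ) ^ α)
        Filter.atTop Filter.atTop :=
      ((tendsto_rpow_atTop hα).comp tendsto_natCast_atTop_atTop).const_mul_atTop
        (by positivity)
    have h2 : Filter.Tendsto (fun n : ℕ => -(D * K / 2 * (n : ℝ) ^ α))
        Filter.atTop Filter.atBot := Filter.tendsto_neg_atTop_atBot.comp h1
    have h3 := Real.tendsto_exp_atBot.comp h2
    have h4 := (ENNReal.continuous_ofReal.tendsto 0).comp h3
    simpa [Function.comp_def, neg_mul] using h4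
  exact tendsto_of_tendsto_of_tendsto_of_le_of_le' tendsto_const_nhds hexp
    (Filter.Eventually.of_forall fun n => zero_le) hA
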